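/- Let A be a real n×n matrix (n ≥ 2), λ ∈ ℂ, and u, v ∈ ℂⁿ both nonzero, such that A·v = λ·u and Aᵀ·u = λ·v. Then |λ| ≤ max over i of max(R_i(A), C_i(A)), where R_i(A) = Σ_k |a_{ik}| and C_i(A) = Σ_k |a_{ki}| are the i-th absolute row and column sums of A. -/

import Mathlib

theorem stmt_11 {n : ℕ} (hn : 2 ≤ n) (A : Matrix (Fin n) (Fin n) ℝ)
    (lam : ℂ) (u v : Fin n → ℂ) (hu : u ≠ 0) (hv : v ≠ 0)
    (h1 : (A.map (Complex.ofReal)).mulVec v = lam • u)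
    (h2 : (A.map (Complex.ofReal)).transpose.mulVec u = lam • v) :
    ∃ i : Fin n, ‖lam‖ ≤ max (∑ k, |A i k|) (∑ k, |A k i|) := by
  set f : Fin n → ℝ := fun i => max (‖u i‖) (‖v i‖) with hf
  have hne : (⟨0, by omega⟩ : Fin n) ∈ (Finset.univ : Finset (Fin n)) := Finset.mem_univ _
  obtain ⟨i, -, hi⟩ := Finset.exists_max_image Finset.univ f ⟨_, hne⟩
  have hMpos : 0 < f i := by
    obtain ⟨j, hj⟩ := Function.ne_iff.mp hu
    have h0 : 0 < f j :=
      lt_of_lt_of_le (norm_pos_iff.mpr hj) (le_max_left _ _)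
    exact lt_of_lt_of_le h0 (hi j (Finset.mem_univ j))
  have hfv : ∀ k, ‖v k‖ ≤ f i :=
    fun k => le_trans (le_max_right _ _) (hi k (Finset.mem_univ k))
  have hfu : ∀ k, ‖u k‖ ≤ f i :=
    fun k => le_trans (le_max_left _ _) (hi k (Finset.mem_univ k))
  refine ⟨i, ?_⟩
  rcases le_total (‖v i‖) (‖u i‖) with h | h
  · -- f i = |u i|, use row sum
    have hfi : f i = ‖u i‖ := max_eq_left h
    have key : ‖lam‖ * f i ≤ (∑ k, |A i k|) * f i := by
      have e1 : lam * u i = ∑ k, (A i k : ℂ) * v k := by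
        have := congrFun h1 i
        simpa [Matrix.mulVec, dotProduct, Matrix.map_apply] using this.symm
      calc ‖lam‖ * f i = ‖lam * u i‖ := by
            rw [norm_mul, hfi]
        _ = ‖∑ k, (A i k : ℂ) * v k‖ := by rw [e1]
        _ ≤ ∑ k, ‖(A i k : ℂ) * v k‖ := norm_sum_le _ _
        _ ≤ ∑ k, |A i k| * f i := by
            refine Finset.sum_le_sum fun k _ => ?_
            rw [norm_mul, Complex.norm_real, Real.norm_eq_abs]
            exact mul_le_mul_of_nonneg_left (hfv k) (abs_nonneg _)
        _ = (∑ k, |A i k|) * f i := by rw [Finset.sum_mul]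
    have := (mul_le_mul_iff_left₀ hMpos).mp key
    exact le_trans this (le_max_left _ _)
  · -- f i = |v i|, use column sum
    have hfi : f i = ‖v i‖ := max_eq_right h
    have key : ‖lam‖ * f i ≤ (∑ k, |A k i|) * f i := by
      have e1 : lam * v i = ∑ k, (A k i : ℂ) * u k := by
        have := congrFun h2 i
        simpa [Matrix.mulVec, dotProduct, Matrix.map_apply,
          Matrix.transpose_apply] using this.symm
      calc ‖lam‖ * f i = ‖lam * v i‖ := by
            rw [norm_mul, hfi]
        _ = ‖∑ k, (A k i : ℂ) * u k‖ := by rw [e1]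
        _ ≤ ∑ k, ‖(A k i : ℂ) * u k‖ := norm_sum_le _ _
        _ ≤ ∑ k, |A k i| * f i := by
            refine Finset.sum_le_sum fun k _ => ?_
            rw [norm_mul, Complex.norm_real, Real.norm_eq_abs]
            exact mul_le_mul_of_nonneg_left (hfu k) (abs_nonneg _)
        _ = (∑ k, |A k i|) * f i := by rw [Finset.sum_mul]
    have := (mul_le_mul_iff_left₀ hMpos).mp key
    exact le_trans this (le_max_right _ _)
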